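/- Let (M, ρ) be a compact metric space and μ a Borel probability measure on M. Suppose there exist constants c > 0, r₀ > 0 and a real number d ≥ 1 such that μ(B(x,r)) ≥ c·r^d for every x ∈ M and every 0 < r < r₀, where B(x,r) denotes the open ball of radius r around x. Fix κ ∈ (0,1). Then there exist θ > 0 and n₀ ∈ ℕ such that for every n ≥ n₀, if X₁, …, X_n are independent M-valued random variables each with law μ, then P( sup_{x ∈ M} ρ(x, {X₁,…,X_n}) ≥ n^{(κ−1)/d} ) ≤ exp(−θ·n^κ), where ρ(x, A) = min_{a ∈ A} ρ(x,a) denotes the distance from a point to a finite set. -/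

import Mathlib

open MeasureTheory ProbabilityTheory
open scoped ENNReal NNReal

/-- A maximal `ε/8`-separated set is an `ε/4`-net. -/
lemma spacing_net_exists {M : Type} [MetricSpace M] [CompactSpace M] {ε : ℝ} (hε : 0 < ε) :
    ∃ s : Finset M, (∀ x : M, ∃ y ∈ s, dist x y < ε / 4) ∧
      ∀ a ∈ s, ∀ b ∈ s, a ≠ b → ε / 8 ≤ dist a b := by
  classical
  obtain ⟨t, -, htf, hcov⟩ :=
    finite_cover_balls_of_compact (isCompact_univ (X := M)) (by positivity : (0:ℝ) < ε/8)
  set t' := htf.toFinset with ht'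
  set cands := t'.powerset.filter (fun u => ∀ a ∈ u, ∀ b ∈ u, a ≠ b → ε/8 ≤ dist a b)
    with hcands
  have hempty : ∅ ∈ cands := by simp [hcands]
  obtain ⟨u, hu, hmax⟩ := cands.exists_max_image Finset.card ⟨∅, hempty⟩
  have husub : u ⊆ t' := Finset.mem_powerset.mp (Finset.mem_filter.mp hu).1
  have husep : ∀ a ∈ u, ∀ b ∈ u, a ≠ b → ε/8 ≤ dist a b := (Finset.mem_filter.mp hu).2
  refine ⟨u, ?_, husep⟩
  intro x
  have hx : x ∈ ⋃ p ∈ t, Metric.ball p (ε/8) := hcov (Set.mem_univ x)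
  obtain ⟨p, hpt, hxp⟩ := Set.mem_iUnion₂.mp hx
  have hp' : p ∈ t' := htf.mem_toFinset.mpr hpt
  by_cases hcase : ∃ y ∈ u, dist p y < ε/8
  · obtain ⟨y, hyu, hpy⟩ := hcase
    refine ⟨y, hyu, ?_⟩
    have hxp' : dist x p < ε/8 := Metric.mem_ball.mp hxp
    calc dist x y ≤ dist x p + dist p y := dist_triangle _ _ _
      _ < ε/8 + ε/8 := by linarith
      _ = ε/4 := by ring
  · push_neg at hcase
    exfalso
    have hpu : p ∉ u := by
      intro h
      have := hcase p h
      rw [dist_self] at this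
      linarith
    have hins : insert p u ∈ cands := by
      refine Finset.mem_filter.mpr ⟨Finset.mem_powerset.mpr (Finset.insert_subset hp' husub), ?_⟩
      intro a ha b hb hab
      rcases Finset.mem_insert.mp ha with ha' | ha'
      · rcases Finset.mem_insert.mp hb with hb' | hb'
        · exact absurd (ha'.trans hb'.symm) hab
        · rw [ha']; exact hcase b hb'
      · rcases Finset.mem_insert.mp hb with hb' | hb'
        · rw [hb', dist_comm]; exact hcase a ha'
        · exact husep a ha' b hb' hab
    have := hmax _ hins
    rw [Finset.card_insert_of_notMem hpu] at this
    omega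

/-- Cardinality bound for a separated set via the measure lower bound on balls. -/
lemma spacing_card_bound {M : Type} [MetricSpace M] [MeasurableSpace M] [BorelSpace M]
    (μ : Measure M) [IsProbabilityMeasure μ]
    {c d ε : ℝ} (hε : 0 < ε)
    (hball16 : ∀ y : M, ENNReal.ofReal (c * (ε/16) ^ d) ≤ μ (Metric.ball y (ε/16)))
    (s : Finset M) (hsep : ∀ a ∈ s, ∀ b ∈ s, a ≠ b → ε / 8 ≤ dist a b) :
    (s.card : ℝ) * (c * (ε/16) ^ d) ≤ 1 := by
  have hdisj : (s : Set M).PairwiseDisjoint (fun y => Metric.ball y (ε/16)) := by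
    intro a ha b hb hab
    apply Metric.ball_disjoint_ball
    have := hsep a (by simpa using ha) b (by simpa using hb) hab
    linarith
  have hmeas := measure_biUnion_finset (μ := μ) hdisj
    (fun b _ => Metric.isOpen_ball.measurableSet)
  have hle : ENNReal.ofReal ((s.card : ℝ) * (c * (ε/16)^d)) ≤ 1 := by
    rcases le_or_gt (c * (ε/16)^d) 0 with h | h
    · have : (s.card : ℝ) * (c * (ε/16)^d) ≤ 0 :=
        mul_nonpos_of_nonneg_of_nonpos (Nat.cast_nonneg _) h
      simp [ENNReal.ofReal_of_nonpos this]
    · rw [ENNReal.ofReal_mul (Nat.cast_nonneg _), ENNReal.ofReal_natCast]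
      calc (s.card : ℝ≥0∞) * ENNReal.ofReal (c * (ε/16)^d)
          = ∑ y ∈ s, ENNReal.ofReal (c * (ε/16)^d) := by
            rw [Finset.sum_const, nsmul_eq_mul]
        _ ≤ ∑ y ∈ s, μ (Metric.ball y (ε/16)) := Finset.sum_le_sum fun y _ => hball16 y
        _ = μ (⋃ y ∈ s, Metric.ball y (ε/16)) := hmeas.symm
        _ ≤ μ Set.univ := measure_mono (Set.subset_univ _)
        _ = 1 := measure_univ
  exact ENNReal.ofReal_le_one.mp hle

/-- Probability that an i.i.d. sample completely misses a set of measure at least `p`. -/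
lemma spacing_miss_prob {Ω M : Type} [MeasureSpace Ω] [IsProbabilityMeasure (ℙ : Measure Ω)]
    [MeasurableSpace M] {μ : Measure M} [IsProbabilityMeasure μ]
    {n : ℕ} {X : Fin n → Ω → M} (hX : ∀ i, Measurable (X i))
    (hlaw : ∀ i, (ℙ : Measure Ω).map (X i) = μ)
    (hind : iIndepFun X (ℙ : Measure Ω))
    {B : Set M} (hB : MeasurableSet B) {p : ℝ} (hp0 : 0 ≤ p)
    (hp : ENNReal.ofReal p ≤ μ B) :
    (ℙ : Measure Ω) (⋂ i, X i ⁻¹' Bᶜ) ≤ ENNReal.ofReal (Real.exp (-p) ^ n) := by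
  have hone : ∀ i : Fin n, (ℙ : Measure Ω) (X i ⁻¹' Bᶜ) ≤ ENNReal.ofReal (Real.exp (-p)) := by
    intro i
    have hmap : (ℙ : Measure Ω) (X i ⁻¹' Bᶜ) = μ Bᶜ := by
      rw [← hlaw i, Measure.map_apply (hX i) hB.compl]
    rw [hmap, measure_compl hB (measure_ne_top μ B), measure_univ]
    calc (1 : ℝ≥0∞) - μ B ≤ 1 - ENNReal.ofReal p := tsub_le_tsub_left hp 1
      _ = ENNReal.ofReal (1 - p) := by
          rw [← ENNReal.ofReal_one, ← ENNReal.ofReal_sub _ hp0]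
      _ ≤ ENNReal.ofReal (Real.exp (-p)) :=
          ENNReal.ofReal_le_ofReal (Real.one_sub_le_exp_neg p)
  have hInter := hind.meas_iInter (s := fun i => X i ⁻¹' Bᶜ)
      (fun i => ⟨Bᶜ, hB.compl, rfl⟩)
  rw [hInter]
  calc ∏ i : Fin n, (ℙ : Measure Ω) (X i ⁻¹' Bᶜ)
      ≤ ∏ i : Fin n, ENNReal.ofReal (Real.exp (-p)) :=
        Finset.prod_le_prod' (fun i _ => hone i)
    _ = ENNReal.ofReal (Real.exp (-p)) ^ n := by simp
    _ = ENNReal.ofReal (Real.exp (-p) ^ n) := (ENNReal.ofReal_pow (Real.exp_nonneg _) n).symm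

/-- spacing lemma for metric measure spaces. If `μ(B(x,r)) ≥ c·r^d` for all
`x ∈ M` and `0 < r < r₀`, then for fixed `κ ∈ (0,1)` there are `θ > 0` and `n₀` such that
for all `n ≥ n₀` and every i.i.d. sample `X₁,…,Xₙ` from `μ`, the probability that the
sample fails to be `n^((κ-1)/d)`-dense in `M` is at most `exp(-θ·n^κ)`. -/
theorem spacing_lemma
    (M : Type) [MetricSpace M] [CompactSpace M]
    [MeasurableSpace M] [BorelSpace M]
    (μ : Measure M) [IsProbabilityMeasure μ]
    (c r₀ d : ℝ) (hc : 0 < c) (hr₀ : 0 < r₀) (hd : 1 ≤ d)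
    (hball : ∀ x : M, ∀ r : ℝ, 0 < r → r < r₀ →
      ENNReal.ofReal (c * r ^ d) ≤ μ (Metric.ball x r))
    (κ : ℝ) (hκ₀ : 0 < κ) (hκ₁ : κ < 1) :
    ∃ θ : ℝ, 0 < θ ∧ ∃ n₀ : ℕ, ∀ n : ℕ, n₀ ≤ n →
      ∀ (Ω : Type) (_ : MeasureSpace Ω) (_ : IsProbabilityMeasure (ℙ : Measure Ω))
        (X : Fin n → Ω → M),
        (∀ i, Measurable (X i)) →
        (∀ i, (ℙ : Measure Ω).map (X i) = μ) →
        iIndepFun X (ℙ : Measure Ω) →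
        (ℙ : Measure Ω) {ω : Ω |
            (n : ℝ) ^ ((κ - 1) / d) ≤
              ⨆ x : M, Metric.infDist x (Set.range fun i => X i ω)} ≤
          ENNReal.ofReal (Real.exp (-θ * (n : ℝ) ^ κ)) := by
  classical
  have hd0 : (0:ℝ) < d := lt_of_lt_of_le one_pos hd
  have h4d : (0:ℝ) < (4:ℝ) ^ d := Real.rpow_pos_of_pos (by norm_num) d
  have h16d : (0:ℝ) < (16:ℝ) ^ d := Real.rpow_pos_of_pos (by norm_num) d
  set a : ℝ := c / 4 ^ d with ha_def
  have ha : 0 < a := div_pos hc h4d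
  set θ : ℝ := a / 2 with hθ_def
  have hθ : 0 < θ := by positivity
  set K : ℝ := 16 ^ d / c with hK_def
  have hK : 0 < K := div_pos h16d hc
  refine ⟨θ, hθ, ?_⟩
  -- eventual conditions on n
  have hE1 : ∀ᶠ x : ℝ in Filter.atTop, x ^ ((κ-1)/d) < r₀ := by
    have hpos : 0 < (1-κ)/d := div_pos (by linarith) hd0
    have ht := tendsto_rpow_neg_atTop hpos
    have := ht.eventually_lt_const hr₀
    filter_upwards [this] with x hx
    have : -((1-κ)/d) = (κ-1)/d := by ring
    rwa [this] at hx
  have hlogK : ∀ᶠ x : ℝ in Filter.atTop, Real.log K ≤ θ/2 * x ^ κ := by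
    have h1 : Filter.Tendsto (fun x : ℝ => θ/2 * x ^ κ) Filter.atTop Filter.atTop :=
      (tendsto_rpow_atTop hκ₀).const_mul_atTop (by positivity)
    exact h1.eventually_ge_atTop _
  have hlogx : ∀ᶠ x : ℝ in Filter.atTop, Real.log x * (1-κ) ≤ θ/2 * x ^ κ := by
    have h1κ : (0:ℝ) < 1 - κ := by linarith
    have hlo := (isLittleO_log_rpow_atTop hκ₀).def
      (show (0:ℝ) < θ/2/(1-κ) by positivity)
    filter_upwards [hlo, Filter.eventually_ge_atTop (1:ℝ)] with x hx hx1
    have hx0 : (0:ℝ) < x := by linarith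
    have hxκ : (0:ℝ) ≤ x ^ κ := Real.rpow_nonneg hx0.le κ
    rw [Real.norm_eq_abs, Real.norm_eq_abs, abs_of_nonneg hxκ] at hx
    have hlx : Real.log x ≤ θ/2/(1-κ) * x ^ κ := (le_abs_self _).trans hx
    have h2 : Real.log x * (1-κ) ≤ (θ/2/(1-κ) * x ^ κ) * (1-κ) :=
      mul_le_mul_of_nonneg_right hlx h1κ.le
    calc Real.log x * (1-κ) ≤ (θ/2/(1-κ) * x ^ κ) * (1-κ) := h2
      _ = (θ/2/(1-κ) * (1-κ)) * x ^ κ := by ring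
      _ = θ/2 * x ^ κ := by rw [div_mul_cancel₀ _ (ne_of_gt h1κ)]
  have hE2 : ∀ᶠ x : ℝ in Filter.atTop, K * x ^ (1-κ) ≤ Real.exp (θ * x ^ κ) := by
    filter_upwards [hlogK, hlogx, Filter.eventually_ge_atTop (1:ℝ)] with x h1 h2 hx1
    have hx0 : (0:ℝ) < x := by linarith
    have heq : K * x ^ (1-κ) = Real.exp (Real.log K + Real.log x * (1-κ)) := by
      rw [Real.exp_add, Real.exp_log hK, ← Real.rpow_def_of_pos hx0]
    rw [heq]
    apply Real.exp_le_exp.mpr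
    linarith
  have hEv : ∀ᶠ n : ℕ in Filter.atTop,
      (((n:ℝ) ^ ((κ-1)/d) < r₀ ∧ K * (n:ℝ) ^ (1-κ) ≤ Real.exp (θ * (n:ℝ) ^ κ)) ∧
        1 ≤ (n:ℝ)) :=
    tendsto_natCast_atTop_atTop.eventually ((hE1.and hE2).and (Filter.eventually_ge_atTop 1))
  obtain ⟨n₀, hn₀⟩ := Filter.eventually_atTop.mp hEv
  refine ⟨n₀, ?_⟩
  intro n hn Ω _ _ X hXm hXlaw hXind
  obtain ⟨⟨hεr₀, hKn⟩, hn1⟩ := hn₀ n hn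
  set ε : ℝ := (n:ℝ) ^ ((κ-1)/d) with hε_def
  have hn0 : (0:ℝ) < n := by linarith
  have hε : 0 < ε := Real.rpow_pos_of_pos hn0 _
  have hNM : Nonempty M := by
    by_contra h
    rw [not_nonempty_iff] at h
    have h1 : μ Set.univ = 1 := measure_univ
    rw [Set.univ_eq_empty_iff.mpr h, measure_empty] at h1
    exact zero_ne_one h1
  obtain ⟨s, hnet, hsep⟩ := spacing_net_exists (M := M) hε
  -- rpow arithmetic
  have hεd : ε ^ d = (n:ℝ) ^ (κ - 1) := by
    rw [hε_def, ← Real.rpow_mul hn0.le, div_mul_cancel₀ _ (ne_of_gt hd0)]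
  have hnεd : (n:ℝ) * ε ^ d = (n:ℝ) ^ κ := by
    rw [hεd]
    nth_rewrite 1 [← Real.rpow_one (n:ℝ)]
    rw [← Real.rpow_add hn0]
    norm_num
  -- measure lower bounds on small balls
  have hball4 : ∀ y : M, ENNReal.ofReal (c * (ε/4) ^ d) ≤ μ (Metric.ball y (ε/4)) :=
    fun y => hball y (ε/4) (by positivity) (by linarith)
  have hball16 : ∀ y : M, ENNReal.ofReal (c * (ε/16) ^ d) ≤ μ (Metric.ball y (ε/16)) :=
    fun y => hball y (ε/16) (by positivity) (by linarith)
  -- cardinality bound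
  have hcard : (s.card : ℝ) ≤ K * (n:ℝ) ^ (1-κ) := by
    have h1 := spacing_card_bound μ hε hball16 s hsep
    have hε16 : c * (ε/16) ^ d = c / 16 ^ d * (n:ℝ) ^ (κ-1) := by
      rw [Real.div_rpow hε.le (by norm_num : (0:ℝ) ≤ 16), hεd]; ring
    rw [hε16] at h1
    have hnκ1 : (0:ℝ) < (n:ℝ) ^ (κ-1) := Real.rpow_pos_of_pos hn0 _
    have hQ : (0:ℝ) < c / 16 ^ d * (n:ℝ) ^ (κ-1) := mul_pos (div_pos hc h16d) hnκ1
    have hpow : (n:ℝ) ^ (κ-1) * (n:ℝ) ^ (1-κ) = 1 := by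
      rw [← Real.rpow_add hn0]
      norm_num
    have hmul : (c / 16 ^ d * (n:ℝ) ^ (κ-1)) * (K * (n:ℝ) ^ (1-κ)) = 1 := by
      have heq : (c / 16 ^ d * (n:ℝ) ^ (κ-1)) * (K * (n:ℝ) ^ (1-κ))
          = (c / 16 ^ d * (16 ^ d / c)) * ((n:ℝ) ^ (κ-1) * (n:ℝ) ^ (1-κ)) := by
        rw [hK_def]; ring
      rw [heq, hpow, mul_one, div_mul_div_comm, mul_comm c _, div_self (by positivity)]
    have h2 : (s.card : ℝ) ≤ 1 / (c / 16 ^ d * (n:ℝ) ^ (κ-1)) := (le_div_iff₀ hQ).mpr h1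
    rwa [(eq_one_div_of_mul_eq_one_left ?_).symm] at h2
    rwa [mul_comm] at hmul
  -- event inclusion
  have hsub : {ω : Ω | ε ≤ ⨆ x : M, Metric.infDist x (Set.range fun i => X i ω)} ⊆
      ⋃ y ∈ s, ⋂ i, X i ⁻¹' (Metric.ball y (ε/4))ᶜ := by
    intro ω hω
    by_contra hmem
    have hmem' : ∀ y ∈ s, ∃ i, X i ω ∈ Metric.ball y (ε/4) := by
      intro y hy
      by_contra hno
      push_neg at hno
      exact hmem (Set.mem_biUnion hy (Set.mem_iInter.mpr fun i => hno i))
    have hsup : (⨆ x : M, Metric.infDist x (Set.range fun i => X i ω)) ≤ ε/2 := by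
      apply ciSup_le
      intro x
      obtain ⟨y, hy, hxy⟩ := hnet x
      obtain ⟨i, hi⟩ := hmem' y hy
      have h1 : Metric.infDist x (Set.range fun i => X i ω) ≤ dist x (X i ω) :=
        Metric.infDist_le_dist_of_mem ⟨i, rfl⟩
      have hdi : dist (X i ω) y < ε/4 := Metric.mem_ball.mp hi
      have h2 : dist x (X i ω) ≤ dist x y + dist y (X i ω) := dist_triangle _ _ _
      rw [dist_comm y (X i ω)] at h2
      linarith [hω]
    have : ε ≤ ε/2 := le_trans hω hsup
    linarith
  -- probability of missing one ball
  have hmiss : ∀ y ∈ s, (ℙ : Measure Ω) (⋂ i, X i ⁻¹' (Metric.ball y (ε/4))ᶜ)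
      ≤ ENNReal.ofReal (Real.exp (-(c * (ε/4) ^ d)) ^ n) := fun y _ =>
    spacing_miss_prob hXm hXlaw hXind Metric.isOpen_ball.measurableSet
      (by positivity) (hball4 y)
  -- final real-number estimate
  have hexp : Real.exp (-(c * (ε/4) ^ d)) ^ n = Real.exp (-(a * (n:ℝ) ^ κ)) := by
    rw [← Real.exp_nat_mul]
    congr 1
    rw [Real.div_rpow hε.le (by norm_num : (0:ℝ) ≤ 4)]
    have heq : (n:ℝ) * -(c * (ε ^ d / 4 ^ d)) = -(a * ((n:ℝ) * ε ^ d)) := by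
      rw [ha_def]; ring
    rw [heq, hnεd]
  have hfinal : (s.card : ℝ) * Real.exp (-(c * (ε/4) ^ d)) ^ n
      ≤ Real.exp (-θ * (n:ℝ) ^ κ) := by
    rw [hexp]
    calc (s.card : ℝ) * Real.exp (-(a * (n:ℝ) ^ κ))
        ≤ (K * (n:ℝ) ^ (1-κ)) * Real.exp (-(a * (n:ℝ) ^ κ)) :=
          mul_le_mul_of_nonneg_right hcard (Real.exp_nonneg _)
      _ ≤ Real.exp (θ * (n:ℝ) ^ κ) * Real.exp (-(a * (n:ℝ) ^ κ)) :=
          mul_le_mul_of_nonneg_right hKn (Real.exp_nonneg _)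
      _ = Real.exp (-θ * (n:ℝ) ^ κ) := by
          rw [← Real.exp_add]; congr 1; rw [hθ_def]; ring
  calc (ℙ : Measure Ω) {ω : Ω | ε ≤ ⨆ x : M, Metric.infDist x (Set.range fun i => X i ω)}
      ≤ (ℙ : Measure Ω) (⋃ y ∈ s, ⋂ i, X i ⁻¹' (Metric.ball y (ε/4))ᶜ) :=
        measure_mono hsub
    _ ≤ ∑ y ∈ s, (ℙ : Measure Ω) (⋂ i, X i ⁻¹' (Metric.ball y (ε/4))ᶜ) :=
        measure_biUnion_finset_le _ _
    _ ≤ ∑ y ∈ s, ENNReal.ofReal (Real.exp (-(c * (ε/4) ^ d)) ^ n) :=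
        Finset.sum_le_sum hmiss
    _ = (s.card : ℝ≥0∞) * ENNReal.ofReal (Real.exp (-(c * (ε/4) ^ d)) ^ n) := by
        rw [Finset.sum_const, nsmul_eq_mul]
    _ = ENNReal.ofReal ((s.card : ℝ) * Real.exp (-(c * (ε/4) ^ d)) ^ n) := by
        rw [ENNReal.ofReal_mul (Nat.cast_nonneg _), ENNReal.ofReal_natCast]
    _ ≤ ENNReal.ofReal (Real.exp (-θ * (n:ℝ) ^ κ)) := ENNReal.ofReal_le_ofReal hfinal
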